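/- Let α be a graphic degree sequence of length n. Then the simple graph on vertex set {1,…,n} whose edge set is exactly the set F(α) of forced edges of α is a threshold graph; equivalently, it contains no four distinct vertices inducing a subgraph isomorphic to 2K₂ (two disjoint edges), P₄ (a path on four vertices), or C₄ (a cycle on four vertices). -/

import Mathlib

/-- `G` is a (labeled) realization of the degree sequence `α` if the degree of
vertex `v` in `G` equals `α v` for every `v`. -/
def IsRealization {n : ℕ} (α : Fin n → ℕ) (G : SimpleGraph (Fin n)) : Prop :=
  ∀ v : Fin n, (G.neighborSet v).ncard = α v

/-- A sequence is graphic if it has a realization. -/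
def Graphic {n : ℕ} (α : Fin n → ℕ) : Prop :=
  ∃ G : SimpleGraph (Fin n), IsRealization α G

/-- The edge `{i,j}` is forced for `α` if it lies in every realization of `α`. -/
def ForcedEdge {n : ℕ} (α : Fin n → ℕ) (i j : Fin n) : Prop :=
  ∀ G : SimpleGraph (Fin n), IsRealization α G → G.Adj i j

/-- The edge `{i,j}` is forbidden for `α` if it lies in no realization of `α`. -/
def ForbiddenEdge {n : ℕ} (α : Fin n → ℕ) (i j : Fin n) : Prop :=
  ∀ G : SimpleGraph (Fin n), IsRealization α G → ¬ G.Adj i j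

/-- `α` majorizes `β`: every partial sum of `α` is at least the corresponding
partial sum of `β`, and the total sums agree. -/
def Majorizes {n : ℕ} (α β : Fin n → ℕ) : Prop :=
  (∀ k : ℕ, k ≤ n →
    ∑ i ∈ Finset.univ.filter (fun i : Fin n => (i : ℕ) < k), β i ≤
    ∑ i ∈ Finset.univ.filter (fun i : Fin n => (i : ℕ) < k), α i) ∧
  ∑ i, α i = ∑ i, β i

/-- The graph `2K₂` on four vertices: two disjoint edges. -/
def twoKtwo : SimpleGraph (Fin 4) := SimpleGraph.fromEdgeSet {s(0, 1), s(2, 3)}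

/-- The path `P₄` on four vertices. -/
def pathFour : SimpleGraph (Fin 4) := SimpleGraph.fromEdgeSet {s(0, 1), s(1, 2), s(2, 3)}

/-- The cycle `C₄` on four vertices. -/
def cycleFour : SimpleGraph (Fin 4) :=
  SimpleGraph.fromEdgeSet {s(0, 1), s(1, 2), s(2, 3), s(3, 0)}

/-- `G` contains an induced copy of the four-vertex graph `H`: there are four
distinct vertices of `G` inducing a subgraph isomorphic to `H`. -/
def HasInducedCopy {n : ℕ} (H : SimpleGraph (Fin 4)) (G : SimpleGraph (Fin n)) : Prop :=
  ∃ f : Fin 4 ↪ Fin n, ∀ x y : Fin 4, H.Adj x y ↔ G.Adj (f x) (f y)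

lemma forcedEdge_symm' {n : ℕ} {α : Fin n → ℕ} {i j : Fin n} (h : ForcedEdge α i j) :
    ForcedEdge α j i := fun G hG => (h G hG).symm

def swapG {n : ℕ} (G : SimpleGraph (Fin n)) (i j k w : Fin n) (hkj : k ≠ j) (hiw : i ≠ w) :
    SimpleGraph (Fin n) where
  Adj x y := (G.Adj x y ∧ s(x,y) ≠ s(i,j) ∧ s(x,y) ≠ s(k,w)) ∨ s(x,y) = s(k,j) ∨ s(x,y) = s(i,w)
  symm := by
    constructor
    intro x y h
    have e : s(y,x) = s(x,y) := Sym2.eq_swap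
    rw [e, G.adj_comm]
    exact h
  loopless := by
    constructor
    intro x h
    rcases h with ⟨h, _, _⟩ | h | h
    · exact G.loopless.irrefl x h
    · rcases Sym2.eq_iff.1 h with ⟨h1, h2⟩ | ⟨h1, h2⟩
      · exact hkj (h1.symm.trans h2)
      · exact hkj (h2.symm.trans h1)
    · rcases Sym2.eq_iff.1 h with ⟨h1, h2⟩ | ⟨h1, h2⟩
      · exact hiw (h1.symm.trans h2)
      · exact hiw (h2.symm.trans h1)

lemma swapG_adj {n : ℕ} (G : SimpleGraph (Fin n)) (i j k w : Fin n) (hkj : k ≠ j) (hiw : i ≠ w)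
    (x y : Fin n) :
    (swapG G i j k w hkj hiw).Adj x y ↔
      (G.Adj x y ∧ s(x,y) ≠ s(i,j) ∧ s(x,y) ≠ s(k,w)) ∨ s(x,y) = s(k,j) ∨ s(x,y) = s(i,w) :=
  Iff.rfl

lemma ncard_swap {n : ℕ} {S : Set (Fin n)} {a b : Fin n} (ha : a ∉ S) (hb : b ∈ S) :
    (insert a (S \ {b})).ncard = S.ncard := by
  have h1 : a ∉ S \ {b} := fun h => ha h.1
  rw [Set.ncard_insert_of_notMem h1 (Set.toFinite _)]
  exact Set.ncard_diff_singleton_add_one hb (Set.toFinite _)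

lemma forced_up {n : ℕ} {α : Fin n → ℕ} {i j k : Fin n}
    (hdeg : α i ≤ α k) (hki : k ≠ i) (hkj : k ≠ j) (hij : i ≠ j)
    (hf : ForcedEdge α i j) : ForcedEdge α k j := by
  intro G hG
  by_contra hnadj
  have hadjij : G.Adj i j := hf G hG
  have hjNi : j ∈ G.neighborSet i := hadjij
  have hjNk : j ∉ G.neighborSet k := hnadj
  have hBA : ((G.neighborSet i \ {j}) \ {k}).ncard < (G.neighborSet k \ {i}).ncard := by
    by_cases hik : G.Adj i k
    · have h1 : i ∈ G.neighborSet k := hik.symm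
      have h2 : k ∈ G.neighborSet i := hik
      have hAc : (G.neighborSet k \ {i}).ncard = α k - 1 := by
        rw [Set.ncard_diff_singleton_of_mem h1, hG k]
      have hBc : ((G.neighborSet i \ {j}) \ {k}).ncard = α i - 1 - 1 := by
        have hk2 : k ∈ G.neighborSet i \ {j} := ⟨h2, fun h => hkj (by simpa using h)⟩
        rw [Set.ncard_diff_singleton_of_mem hk2,
          Set.ncard_diff_singleton_of_mem hjNi, hG i]
      have h2le : 2 ≤ α i := by
        have hsub : ({j, k} : Set (Fin n)) ⊆ G.neighborSet i := by
          intro x hx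
          rcases hx with rfl | hx
          · exact hjNi
          · simp only [Set.mem_singleton_iff] at hx; exact hx ▸ h2
        have hle := Set.ncard_le_ncard hsub (Set.toFinite _)
        rwa [Set.ncard_pair (fun h => hkj h.symm), hG i] at hle
      omega
    · have h1 : i ∉ G.neighborSet k := fun h => hik (SimpleGraph.Adj.symm h)
      have h2 : k ∉ G.neighborSet i := fun h => hik h
      have hAc : (G.neighborSet k \ {i}).ncard = α k := by
        rw [Set.diff_singleton_eq_self h1, hG k]
      have hBc : ((G.neighborSet i \ {j}) \ {k}).ncard = α i - 1 := by
        have h2' : k ∉ G.neighborSet i \ {j} := fun h => h2 h.1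
        rw [Set.diff_singleton_eq_self h2',
          Set.ncard_diff_singleton_of_mem hjNi, hG i]
      have h1le : 1 ≤ α i := by
        have hpos : 0 < (G.neighborSet i).ncard := (Set.ncard_pos (Set.toFinite _)).2 ⟨j, hjNi⟩
        rw [hG i] at hpos
        omega
      omega
  have hex : ∃ w ∈ G.neighborSet k \ {i}, w ∉ G.neighborSet i := by
    by_contra h
    push_neg at h
    have hsub : G.neighborSet k \ {i} ⊆ (G.neighborSet i \ {j}) \ {k} := by
      intro w hw
      obtain ⟨hwNk, hwi⟩ := hw
      refine ⟨⟨h w ⟨hwNk, hwi⟩, ?_⟩, ?_⟩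
      · intro hwj
        simp only [Set.mem_singleton_iff] at hwj
        exact hjNk (hwj ▸ hwNk)
      · intro hwk
        simp only [Set.mem_singleton_iff] at hwk
        exact G.loopless.irrefl k (hwk ▸ hwNk)
    exact absurd (Set.ncard_le_ncard hsub (Set.toFinite _)) (not_le.2 hBA)
  obtain ⟨w, hwA, hwNi⟩ := hex
  obtain ⟨hwNk, hwi'⟩ := hwA
  have hkw : G.Adj k w := hwNk
  have hwi : w ≠ i := by simpa using hwi'
  have hiw : i ≠ w := hwi.symm
  have hniw : ¬ G.Adj i w := hwNi
  have hwj : w ≠ j := by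
    intro h
    rw [h] at hwNk
    exact hjNk hwNk
  have hwk : w ≠ k := fun h => G.loopless.irrefl k (h ▸ hkw)
  have hik2 : i ≠ k := hki.symm
  have hG' : IsRealization α (swapG G i j k w hkj hiw) := by
    intro v
    by_cases hvi : v = i
    · subst hvi
      have hset : (swapG G v j k w hkj hiw).neighborSet v
          = insert w (G.neighborSet v \ {j}) := by
        ext y
        simp only [SimpleGraph.mem_neighborSet, swapG_adj, Set.mem_insert_iff, Set.mem_diff,
          Set.mem_singleton_iff]
        constructor
        · rintro (⟨ha, h1, -⟩ | h | h)
          · exact Or.inr ⟨ha, fun hyj => h1 (by rw [hyj])⟩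
          · rcases Sym2.eq_iff.1 h with ⟨h1, -⟩ | ⟨h1, -⟩
            · exact absurd h1 hik2
            · exact absurd h1 hij
          · rcases Sym2.eq_iff.1 h with ⟨-, h2⟩ | ⟨h1, -⟩
            · exact Or.inl h2
            · exact absurd h1 hiw
        · rintro (rfl | ⟨ha, hyj⟩)
          · exact Or.inr (Or.inr rfl)
          · refine Or.inl ⟨ha, fun h => ?_, fun h => ?_⟩
            · rcases Sym2.eq_iff.1 h with ⟨-, h2⟩ | ⟨h1, -⟩
              · exact hyj h2
              · exact hij h1
            · rcases Sym2.eq_iff.1 h with ⟨h1, -⟩ | ⟨h1, -⟩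
              · exact hik2 h1
              · exact hiw h1
      rw [hset, ncard_swap hwNi hjNi, hG v]
    · by_cases hvj : v = j
      · subst hvj
        have hset : (swapG G i v k w hkj hiw).neighborSet v
            = insert k (G.neighborSet v \ {i}) := by
          ext y
          simp only [SimpleGraph.mem_neighborSet, swapG_adj, Set.mem_insert_iff, Set.mem_diff,
            Set.mem_singleton_iff]
          constructor
          · rintro (⟨ha, h1, -⟩ | h | h)
            · exact Or.inr ⟨ha, fun hyi => h1 (by rw [hyi]; exact Sym2.eq_swap)⟩
            · rcases Sym2.eq_iff.1 h with ⟨h1, -⟩ | ⟨-, h2⟩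
              · exact absurd h1.symm hkj
              · exact Or.inl h2
            · rcases Sym2.eq_iff.1 h with ⟨h1, -⟩ | ⟨h1, -⟩
              · exact absurd h1.symm hij
              · exact absurd h1.symm hwj
          · rintro (rfl | ⟨ha, hyi⟩)
            · exact Or.inr (Or.inl Sym2.eq_swap)
            · refine Or.inl ⟨ha, fun h => ?_, fun h => ?_⟩
              · rcases Sym2.eq_iff.1 h with ⟨h1, -⟩ | ⟨-, h2⟩
                · exact hij h1.symm
                · exact hyi h2
              · rcases Sym2.eq_iff.1 h with ⟨h1, -⟩ | ⟨h1, -⟩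
                · exact hkj h1.symm
                · exact hwj h1.symm
        have hiNj : i ∈ G.neighborSet v := hadjij.symm
        have hkNj : k ∉ G.neighborSet v := fun h => hnadj (SimpleGraph.Adj.symm h)
        rw [hset, ncard_swap hkNj hiNj, hG v]
      · by_cases hvk : v = k
        · subst hvk
          have hset : (swapG G i j v w hkj hiw).neighborSet v
              = insert j (G.neighborSet v \ {w}) := by
            ext y
            simp only [SimpleGraph.mem_neighborSet, swapG_adj, Set.mem_insert_iff, Set.mem_diff,
              Set.mem_singleton_iff]
            constructor
            · rintro (⟨ha, -, h2⟩ | h | h)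
              · exact Or.inr ⟨ha, fun hyw => h2 (by rw [hyw])⟩
              · rcases Sym2.eq_iff.1 h with ⟨-, h2⟩ | ⟨h1, -⟩
                · exact Or.inl h2
                · exact absurd h1 hkj
              · rcases Sym2.eq_iff.1 h with ⟨h1, -⟩ | ⟨h1, -⟩
                · exact absurd h1 hki
                · exact absurd h1.symm hwk
            · rintro (rfl | ⟨ha, hyw⟩)
              · exact Or.inr (Or.inl rfl)
              · refine Or.inl ⟨ha, fun h => ?_, fun h => ?_⟩
                · rcases Sym2.eq_iff.1 h with ⟨h1, -⟩ | ⟨h1, -⟩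
                  · exact hki h1
                  · exact hkj h1
                · rcases Sym2.eq_iff.1 h with ⟨-, h2⟩ | ⟨h1, -⟩
                  · exact hyw h2
                  · exact hwk h1.symm
          rw [hset, ncard_swap hjNk hwNk, hG v]
        · by_cases hvw : v = w
          · subst hvw
            have hset : (swapG G i j k v hkj hiw).neighborSet v
                = insert i (G.neighborSet v \ {k}) := by
              ext y
              simp only [SimpleGraph.mem_neighborSet, swapG_adj, Set.mem_insert_iff, Set.mem_diff,
                Set.mem_singleton_iff]
              constructor
              · rintro (⟨ha, -, h2⟩ | h | h)
                · exact Or.inr ⟨ha, fun hyk => h2 (by rw [hyk]; exact Sym2.eq_swap)⟩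
                · rcases Sym2.eq_iff.1 h with ⟨h1, -⟩ | ⟨h1, -⟩
                  · exact absurd h1 hwk
                  · exact absurd h1 hwj
                · rcases Sym2.eq_iff.1 h with ⟨h1, -⟩ | ⟨-, h2⟩
                  · exact absurd h1 hwi
                  · exact Or.inl h2
              · rintro (rfl | ⟨ha, hyk⟩)
                · exact Or.inr (Or.inr Sym2.eq_swap)
                · refine Or.inl ⟨ha, fun h => ?_, fun h => ?_⟩
                  · rcases Sym2.eq_iff.1 h with ⟨h1, -⟩ | ⟨h1, -⟩
                    · exact hwi h1
                    · exact hwj h1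
                  · rcases Sym2.eq_iff.1 h with ⟨h1, -⟩ | ⟨-, h2⟩
                    · exact hwk h1
                    · exact hyk h2
            have hiNw : i ∉ G.neighborSet v := fun h => hniw (SimpleGraph.Adj.symm h)
            have hkNw : k ∈ G.neighborSet v := hkw.symm
            rw [hset, ncard_swap hiNw hkNw, hG v]
          · have hset : (swapG G i j k w hkj hiw).neighborSet v = G.neighborSet v := by
              ext y
              simp only [SimpleGraph.mem_neighborSet, swapG_adj]
              constructor
              · rintro (⟨ha, -, -⟩ | h | h)
                · exact ha
                · rcases Sym2.eq_iff.1 h with ⟨h1, -⟩ | ⟨h1, -⟩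
                  · exact absurd h1 hvk
                  · exact absurd h1 hvj
                · rcases Sym2.eq_iff.1 h with ⟨h1, -⟩ | ⟨h1, -⟩
                  · exact absurd h1 hvi
                  · exact absurd h1 hvw
              · intro ha
                refine Or.inl ⟨ha, fun h => ?_, fun h => ?_⟩
                · rcases Sym2.eq_iff.1 h with ⟨h1, -⟩ | ⟨h1, -⟩
                  · exact hvi h1
                  · exact hvj h1
                · rcases Sym2.eq_iff.1 h with ⟨h1, -⟩ | ⟨h1, -⟩
                  · exact hvk h1
                  · exact hvw h1
            rw [hset, hG v]
  have hadj' : (swapG G i j k w hkj hiw).Adj i j := hf _ hG'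
  rw [swapG_adj] at hadj'
  rcases hadj' with ⟨-, h1, -⟩ | h | h
  · exact h1 rfl
  · rcases Sym2.eq_iff.1 h with ⟨h1, -⟩ | ⟨h1, -⟩
    · exact hik2 h1
    · exact hij h1
  · rcases Sym2.eq_iff.1 h with ⟨-, h2⟩ | ⟨h1, -⟩
    · exact hwj h2.symm
    · exact hiw h1

/-- for a graphic nonincreasing degree sequence `α`, the simple
graph on `{1,…,n}` whose edge set is exactly the set of forced edges of `α` is a
threshold graph: it has no induced subgraph isomorphic to `2K₂`, `P₄`, or `C₄`. -/
theorem forced_graph_is_threshold {n : ℕ} (α : Fin n → ℕ)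
    (hα : Antitone α) (hb : ∀ v, α v ≤ n - 1) (hg : Graphic α) :
    ¬ HasInducedCopy twoKtwo (SimpleGraph.fromRel (fun i j : Fin n => ForcedEdge α i j)) ∧
    ¬ HasInducedCopy pathFour (SimpleGraph.fromRel (fun i j : Fin n => ForcedEdge α i j)) ∧
    ¬ HasInducedCopy cycleFour (SimpleGraph.fromRel (fun i j : Fin n => ForcedEdge α i j)) := by
  set GF := SimpleGraph.fromRel (fun i j : Fin n => ForcedEdge α i j) with hGF
  have key : ∀ a b c d : Fin n, a ≠ b → a ≠ c → a ≠ d → b ≠ d → c ≠ d →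
      ForcedEdge α a b → ForcedEdge α c d → ¬ ForcedEdge α a c → ¬ ForcedEdge α b d →
      False := by
    intro a b c d hab hac had hbd hcd Fab Fcd nFac nFbd
    rcases le_total (α a) (α d) with h | h
    · exact nFbd (forcedEdge_symm' (forced_up h had.symm hbd.symm hab Fab))
    · exact nFac (forced_up h had hac hcd.symm (forcedEdge_symm' Fcd))
  have toF : ∀ a b : Fin n, GF.Adj a b → ForcedEdge α a b := by
    intro a b h
    rcases (SimpleGraph.fromRel_adj _ a b).1 h with ⟨-, h | h⟩
    · exact h
    · exact forcedEdge_symm' h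
  have toN : ∀ a b : Fin n, a ≠ b → ¬ GF.Adj a b → ¬ ForcedEdge α a b := by
    intro a b hne h hF
    exact h ((SimpleGraph.fromRel_adj _ a b).2 ⟨hne, Or.inl hF⟩)
  have extract : ∀ H : SimpleGraph (Fin 4), H.Adj 0 1 → H.Adj 2 3 → ¬ H.Adj 0 2 →
      ¬ H.Adj 1 3 → ¬ HasInducedCopy H GF := by
    rintro H h01 h23 h02 h13 ⟨f, hfi⟩
    have hne : ∀ x y : Fin 4, x ≠ y → f x ≠ f y := fun x y hxy => f.injective.ne hxy
    refine key (f 0) (f 1) (f 2) (f 3) (hne 0 1 (by decide)) (hne 0 2 (by decide))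
      (hne 0 3 (by decide)) (hne 1 3 (by decide)) (hne 2 3 (by decide))
      (toF _ _ ((hfi 0 1).1 h01)) (toF _ _ ((hfi 2 3).1 h23))
      (toN _ _ (hne 0 2 (by decide)) (fun h => h02 ((hfi 0 2).2 h)))
      (toN _ _ (hne 1 3 (by decide)) (fun h => h13 ((hfi 1 3).2 h)))
  refine ⟨extract _ ?_ ?_ ?_ ?_, extract _ ?_ ?_ ?_ ?_, extract _ ?_ ?_ ?_ ?_⟩ <;>
    simp [twoKtwo, pathFour, cycleFour, SimpleGraph.fromEdgeSet_adj, Sym2.eq_iff]
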